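/- Let X be a hypergeometric random variable counting successes when drawing k items without replacement from a population of size n containing ℓ success states, where k is a positive multiple of 3, k/3 ≤ ℓ ≤ n, and the mode of the distribution (k+1)(ℓ+1)/(n+2) is less than k/3. Then Pr[X ≥ k/3] ≤ (2k/3 + 1)·C(k, k/3)·(ℓ/n)^{k/3} ≤ (9ℓ/n)^{k/3}. -/

import Mathlib

/-- descFactorial ratio bound: ℓ!/(ℓ-j)! · n^j ≤ ℓ^j · n!/(n-j)! when ℓ ≤ n. -/
lemma aux_descFact (ℓ n : ℕ) (h : ℓ ≤ n) :
    ∀ j, ℓ.descFactorial j * n ^ j ≤ ℓ ^ j * n.descFactorial j := by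
  intro j
  induction j with
  | zero => simp
  | succ j ih =>
    rw [Nat.descFactorial_succ, Nat.descFactorial_succ, pow_succ, pow_succ]
    have key : (ℓ - j) * n ≤ ℓ * (n - j) := by
      calc (ℓ - j) * n = ℓ * n - j * n := Nat.sub_mul ℓ j n
        _ ≤ ℓ * n - ℓ * j := Nat.sub_le_sub_left
              (le_of_le_of_eq (Nat.mul_le_mul_right j h) (Nat.mul_comm n j)) _
        _ = ℓ * (n - j) := (Nat.mul_sub ℓ n j).symm
    calc (ℓ - j) * ℓ.descFactorial j * (n ^ j * n)
        = ((ℓ - j) * n) * (ℓ.descFactorial j * n ^ j) := by ring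
      _ ≤ (ℓ * (n - j)) * (ℓ ^ j * n.descFactorial j) := Nat.mul_le_mul key ih
      _ = ℓ ^ j * ℓ * ((n - j) * n.descFactorial j) := by ring

lemma aux_choose_ratio (ℓ n j : ℕ) (h : ℓ ≤ n) :
    ℓ.choose j * n ^ j ≤ ℓ ^ j * n.choose j := by
  have hf : 0 < j.factorial := Nat.factorial_pos j
  have := aux_descFact ℓ n h j
  rw [Nat.descFactorial_eq_factorial_mul_choose, Nat.descFactorial_eq_factorial_mul_choose] at this
  apply Nat.le_of_mul_le_mul_left _ hf
  calc j.factorial * (ℓ.choose j * n ^ j) = j.factorial * ℓ.choose j * n ^ j := by ring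
    _ ≤ ℓ ^ j * (j.factorial * n.choose j) := this
    _ = j.factorial * (ℓ ^ j * n.choose j) := by ring

/-- Main pointwise nat bound: C(ℓ,j)·C(n-ℓ,k-j)·n^j ≤ C(k,j)·ℓ^j·C(n,k). -/
lemma aux_A (n ℓ k j : ℕ) (hjl : j ≤ ℓ) (hln : ℓ ≤ n) (hjk : j ≤ k) (hkn : k ≤ n) :
    ℓ.choose j * (n - ℓ).choose (k - j) * n ^ j ≤ k.choose j * ℓ ^ j * n.choose k := by
  have hid : n.choose k * k.choose j = n.choose j * (n - j).choose (k - j) :=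
    Nat.choose_mul hjk
  have h1 : (n - ℓ).choose (k - j) ≤ (n - j).choose (k - j) :=
    Nat.choose_le_choose _ (Nat.sub_le_sub_left hjl n)
  have h2 : ℓ.choose j * n ^ j ≤ ℓ ^ j * n.choose j := aux_choose_ratio ℓ n j hln
  calc ℓ.choose j * (n - ℓ).choose (k - j) * n ^ j
      = (ℓ.choose j * n ^ j) * (n - ℓ).choose (k - j) := by ring
    _ ≤ (ℓ ^ j * n.choose j) * (n - j).choose (k - j) := Nat.mul_le_mul h2 h1
    _ = ℓ ^ j * (n.choose j * (n - j).choose (k - j)) := by ring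
    _ = ℓ ^ j * (n.choose k * k.choose j) := by rw [hid]
    _ = k.choose j * ℓ ^ j * n.choose k := by ring

/-- Monotone decay of the binomial envelope: for m ≤ j, given 3ℓ ≤ n and k = 3m. -/
lemma aux_B (n ℓ m : ℕ) (h3 : 3 * ℓ ≤ n) :
    ∀ j, m ≤ j → (3 * m).choose j * ℓ ^ j * n ^ m ≤ (3 * m).choose m * ℓ ^ m * n ^ j := by
  intro j hj
  induction j, hj using Nat.le_induction with
  | base => exact le_rfl
  | succ j hj ih =>
    have key : (3 * m - j) * ℓ ≤ (j + 1) * n := by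
      apply Nat.le_of_mul_le_mul_left _ (by norm_num : 0 < 3)
      calc 3 * ((3 * m - j) * ℓ) = (3 * m - j) * (3 * ℓ) := by ring
        _ ≤ (2 * m) * n := Nat.mul_le_mul (by omega) h3
        _ ≤ (3 * (j + 1)) * n := Nat.mul_le_mul_right _ (by omega)
        _ = 3 * ((j + 1) * n) := by ring
    have hcs : (3 * m).choose (j + 1) * (j + 1) = (3 * m).choose j * (3 * m - j) :=
      Nat.choose_succ_right_eq _ _
    apply Nat.le_of_mul_le_mul_left _ (Nat.succ_pos j)
    calc (j + 1) * ((3 * m).choose (j + 1) * ℓ ^ (j + 1) * n ^ m)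
        = ((3 * m).choose (j + 1) * (j + 1)) * (ℓ ^ j * ℓ) * n ^ m := by ring
      _ = ((3 * m).choose j * (3 * m - j)) * (ℓ ^ j * ℓ) * n ^ m := by rw [hcs]
      _ = ((3 * m - j) * ℓ) * ((3 * m).choose j * ℓ ^ j * n ^ m) := by ring
      _ ≤ ((j + 1) * n) * ((3 * m).choose m * ℓ ^ m * n ^ j) := Nat.mul_le_mul key ih
      _ = (j + 1) * ((3 * m).choose m * ℓ ^ m * n ^ (j + 1)) := by ring

/-- (2m+1)·C(3m,m) ≤ 9^m for m ≥ 1. -/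
lemma aux_C : ∀ m, 1 ≤ m → (2 * m + 1) * (3 * m).choose m ≤ 9 ^ m := by
  intro m hm
  induction m, hm using Nat.le_induction with
  | base => norm_num
  | succ m hm ih =>
    -- identity: (m+1)(2m+1)(2m+2)·C(3m+3,m+1) = (3m+1)(3m+2)(3m+3)·C(3m,m)
    have e1 : (3 * m + 3) * (3 * m + 2).choose m = (3 * m + 3).choose (m + 1) * (m + 1) :=
      Nat.add_one_mul_choose_eq (3 * m + 2) m
    have e2 : (3 * m + 1).choose m * (3 * m + 2) = (3 * m + 2).choose m * (2 * m + 2) := by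
      have := Nat.choose_mul_succ_eq (3 * m + 1) m
      simpa [show 3 * m + 1 + 1 = 3 * m + 2 by ring, show 3 * m + 1 + 1 - m = 2 * m + 2 by omega]
        using this
    have e3 : (3 * m).choose m * (3 * m + 1) = (3 * m + 1).choose m * (2 * m + 1) := by
      have := Nat.choose_mul_succ_eq (3 * m) m
      simpa [show 3 * m + 1 - m = 2 * m + 1 by omega] using this
    have hid : (m + 1) * ((2 * m + 1) * ((2 * m + 2) * (3 * m + 3).choose (m + 1)))
        = (3 * m + 1) * ((3 * m + 2) * ((3 * m + 3) * (3 * m).choose m)) := by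
      calc (m + 1) * ((2 * m + 1) * ((2 * m + 2) * (3 * m + 3).choose (m + 1)))
          = (2 * m + 1) * ((2 * m + 2) * ((3 * m + 3).choose (m + 1) * (m + 1))) := by ring
        _ = (2 * m + 1) * ((2 * m + 2) * ((3 * m + 3) * (3 * m + 2).choose m)) := by rw [e1]
        _ = (3 * m + 3) * ((2 * m + 1) * ((3 * m + 2).choose m * (2 * m + 2))) := by ring
        _ = (3 * m + 3) * ((2 * m + 1) * ((3 * m + 1).choose m * (3 * m + 2))) := by rw [e2]
        _ = (3 * m + 3) * ((3 * m + 2) * ((3 * m + 1).choose m * (2 * m + 1))) := by ring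
        _ = (3 * m + 3) * ((3 * m + 2) * ((3 * m).choose m * (3 * m + 1))) := by rw [e3]
        _ = (3 * m + 1) * ((3 * m + 2) * ((3 * m + 3) * (3 * m).choose m)) := by ring
    have hkey : (2 * (m + 1) + 1) * (3 * (m + 1)).choose (m + 1)
        ≤ 9 * ((2 * m + 1) * (3 * m).choose m) := by
      have hpos : 0 < (m + 1) * ((2 * m + 1) * (2 * m + 2)) := by positivity
      apply Nat.le_of_mul_le_mul_left _ hpos
      have h3m : 3 * (m + 1) = 3 * m + 3 := by ring
      rw [h3m]
      calc (m + 1) * ((2 * m + 1) * (2 * m + 2))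
              * ((2 * (m + 1) + 1) * (3 * m + 3).choose (m + 1))
          = (2 * (m + 1) + 1)
              * ((m + 1) * ((2 * m + 1) * ((2 * m + 2) * (3 * m + 3).choose (m + 1)))) := by ring
        _ = (2 * m + 3)
              * ((3 * m + 1) * ((3 * m + 2) * ((3 * m + 3) * (3 * m).choose m))) := by
              rw [hid]; ring
        _ = ((2 * m + 3) * (3 * m + 1) * (3 * m + 2) * (3 * m + 3)) * (3 * m).choose m := by ring
        _ ≤ (9 * ((m + 1) * ((2 * m + 1) * (2 * m + 2))) * (2 * m + 1)) * (3 * m).choose m := by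
              apply Nat.mul_le_mul_right
              nlinarith [hm]
        _ = (m + 1) * ((2 * m + 1) * (2 * m + 2)) * (9 * ((2 * m + 1) * (3 * m).choose m)) := by
              ring
    calc (2 * (m + 1) + 1) * (3 * (m + 1)).choose (m + 1)
        ≤ 9 * ((2 * m + 1) * (3 * m).choose m) := hkey
      _ ≤ 9 * 9 ^ m := Nat.mul_le_mul_left 9 ih
      _ = 9 ^ (m + 1) := by rw [pow_succ]; ring

theorem stmt_7 (n ℓ k : ℕ) (hk3 : 3 ∣ k) (hkpos : 0 < k) (hkn : k ≤ n)
    (hℓlo : k / 3 ≤ ℓ) (hℓhi : ℓ ≤ n)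
    (hmode : (((k : ℝ) + 1) * ((ℓ : ℝ) + 1)) / ((n : ℝ) + 2) < (k : ℝ) / 3)
    (p : ℕ → ℝ)
    (hp : ∀ j, p j = ((ℓ.choose j : ℝ) * ((n - ℓ).choose (k - j) : ℝ)) / (n.choose k : ℝ)) :
    (∑ j ∈ Finset.Icc (k / 3) k, p j ≤
      (2 * (k : ℝ) / 3 + 1) * (k.choose (k / 3) : ℝ) * ((ℓ : ℝ) / n) ^ (k / 3)) ∧
    ((2 * (k : ℝ) / 3 + 1) * (k.choose (k / 3) : ℝ) * ((ℓ : ℝ) / n) ^ (k / 3) ≤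
      (9 * (ℓ : ℝ) / n) ^ (k / 3)) := by
  obtain ⟨m, rfl⟩ : ∃ m, k = 3 * m := ⟨k / 3, (Nat.div_mul_cancel hk3).symm ▸ by omega⟩
  have hm1 : 1 ≤ m := by omega
  have hmdiv : 3 * m / 3 = m := by omega
  rw [hmdiv] at *
  have hnpos : 0 < n := by omega
  have hnR : (0:ℝ) < n := by exact_mod_cast hnpos
  -- from mode condition: 3ℓ < n
  have hmode' : (3 * (m:ℝ) + 1) * ((ℓ:ℝ) + 1) < (m:ℝ) * ((n:ℝ) + 2) := by
    have h2 : (0:ℝ) < (n:ℝ) + 2 := by linarith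
    rw [div_lt_iff₀ h2] at hmode
    push_cast at hmode
    nlinarith [hmode]
  have hm1R : (1:ℝ) ≤ (m:ℝ) := by exact_mod_cast hm1
  have h3ℓ : 3 * ℓ < n := by
    have hR : 3 * (ℓ:ℝ) < (n:ℝ) := by nlinarith [hmode', hm1R]
    exact_mod_cast hR
  have hCpos : 0 < ((3 * m).choose m : ℝ) := by
    exact_mod_cast Nat.choose_pos (by omega : m ≤ 3 * m)
  have hNKpos : 0 < (n.choose (3 * m) : ℝ) := by exact_mod_cast Nat.choose_pos hkn
  -- pointwise bound
  have hpoint : ∀ j ∈ Finset.Icc m (3 * m),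
      p j ≤ ((3 * m).choose m : ℝ) * ((ℓ : ℝ) / n) ^ m := by
    intro j hj
    simp only [Finset.mem_Icc] at hj
    rw [hp j, div_pow]
    by_cases hjl : j ≤ ℓ
    · -- nat inequality: X * n^m ≤ C(3m,m) ℓ^m C(n,3m)
      have hA := aux_A n ℓ (3 * m) j hjl hℓhi hj.2 hkn
      have hB := aux_B n ℓ m (le_of_lt h3ℓ) j hj.1
      have hnat : ℓ.choose j * (n - ℓ).choose (3 * m - j) * n ^ m
          ≤ (3 * m).choose m * ℓ ^ m * n.choose (3 * m) := by
        have hnj : 0 < n ^ j := pow_pos hnpos j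
        apply Nat.le_of_mul_le_mul_left _ hnj
        calc n ^ j * (ℓ.choose j * (n - ℓ).choose (3 * m - j) * n ^ m)
            = (ℓ.choose j * (n - ℓ).choose (3 * m - j) * n ^ j) * n ^ m := by ring
          _ ≤ ((3 * m).choose j * ℓ ^ j * n.choose (3 * m)) * n ^ m := Nat.mul_le_mul_right _ hA
          _ = ((3 * m).choose j * ℓ ^ j * n ^ m) * n.choose (3 * m) := by ring
          _ ≤ ((3 * m).choose m * ℓ ^ m * n ^ j) * n.choose (3 * m) := Nat.mul_le_mul_right _ hB
          _ = n ^ j * ((3 * m).choose m * ℓ ^ m * n.choose (3 * m)) := by ring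
      have hrhs : ((3 * m).choose m : ℝ) * ((ℓ:ℝ) ^ m / (n:ℝ) ^ m)
          = (((3 * m).choose m : ℝ) * (ℓ:ℝ) ^ m) / (n:ℝ) ^ m := by ring
      rw [hrhs, div_le_div_iff₀ hNKpos (by positivity : (0:ℝ) < (n:ℝ) ^ m)]
      exact_mod_cast hnat
    · have : ℓ.choose j = 0 := Nat.choose_eq_zero_of_lt (by omega)
      rw [this]
      simp only [Nat.cast_zero, zero_mul, zero_div]
      positivity
  have hcard : (Finset.Icc m (3 * m)).card = 2 * m + 1 := by
    rw [Nat.card_Icc]; omega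
  have hsum : ∑ j ∈ Finset.Icc m (3 * m), p j
      ≤ (2 * m + 1 : ℝ) * (((3 * m).choose m : ℝ) * ((ℓ : ℝ) / n) ^ m) := by
    calc ∑ j ∈ Finset.Icc m (3 * m), p j
        ≤ (Finset.Icc m (3 * m)).card • (((3 * m).choose m : ℝ) * ((ℓ : ℝ) / n) ^ m) :=
          Finset.sum_le_card_nsmul _ _ _ hpoint
      _ = (2 * m + 1 : ℝ) * (((3 * m).choose m : ℝ) * ((ℓ : ℝ) / n) ^ m) := by
          rw [hcard, nsmul_eq_mul]; push_cast; ring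
  have hcoef : 2 * ((3 * m : ℕ) : ℝ) / 3 + 1 = (2 * m + 1 : ℝ) := by push_cast; ring
  constructor
  · rw [hcoef]
    calc ∑ j ∈ Finset.Icc m (3 * m), p j
        ≤ (2 * m + 1 : ℝ) * (((3 * m).choose m : ℝ) * ((ℓ : ℝ) / n) ^ m) := hsum
      _ = (2 * m + 1 : ℝ) * ((3 * m).choose m : ℝ) * ((ℓ : ℝ) / n) ^ m := by ring
  · rw [hcoef]
    have h9 : ((2 * m + 1) * (3 * m).choose m : ℕ) ≤ 9 ^ m := aux_C m hm1
    have h9R : ((2 * m + 1 : ℝ)) * ((3 * m).choose m : ℝ) ≤ (9 : ℝ) ^ m := by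
      exact_mod_cast h9
    have hratio : (0:ℝ) ≤ (ℓ : ℝ) / n := by positivity
    calc (2 * m + 1 : ℝ) * ((3 * m).choose m : ℝ) * ((ℓ : ℝ) / n) ^ m
        ≤ (9 : ℝ) ^ m * ((ℓ : ℝ) / n) ^ m := by
          apply mul_le_mul_of_nonneg_right h9R (by positivity)
      _ = (9 * (ℓ : ℝ) / n) ^ m := by
          rw [← mul_pow]; congr 1; field_simp
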